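/- Define the binary Shannon entropy H₂(x) = −x·log₂x − (1−x)·log₂(1−x), with the convention 0·log₂0 = 0. For all p, q ∈ [0,1] with pq < 1, setting a₁ = (1-p)(1-q)/(1-pq), a₂ = p(1-q)/(1-pq), a₃ = (1-p)q/(1-pq), one has a₁·log₂a₁ + a₂·log₂a₂ + a₃·log₂a₃ = (H₂(pq) − H₂(p) − H₂(q))/(1−pq). Equivalently, the Shannon entropy of the eigenvalue distribution (a₁,a₂,a₃) equals (H₂(p) + H₂(q) − H₂(pq))/(1−pq). -/
import Mathlib


/-- The binary Shannon entropy `H₂(x) = −x·log₂x − (1−x)·log₂(1−x)`,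
with the convention `0·log₂0 = 0` (automatic since `Real.logb 2 0 = 0`). -/
noncomputable def H2 (x : ℝ) : ℝ := -(x * Real.logb 2 x) - (1 - x) * Real.logb 2 (1 - x)

lemma key (a b d : ℝ) (hd : d ≠ 0) :
    (a * b / d) * Real.logb 2 (a * b / d) =
      (a * b / d) * Real.logb 2 a + (a * b / d) * Real.logb 2 b
        - (a * b / d) * Real.logb 2 d := by
  by_cases ha : a = 0
  · simp [ha]
  by_cases hb : b = 0
  · simp [hb]
  rw [Real.logb_div (mul_ne_zero ha hb) hd, Real.logb_mul ha hb]
  ring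

lemma Lmul (a b : ℝ) :
    a * b * Real.logb 2 (a * b) = a * b * Real.logb 2 a + a * b * Real.logb 2 b := by
  by_cases ha : a = 0
  · simp [ha]
  by_cases hb : b = 0
  · simp [hb]
  rw [Real.logb_mul ha hb]
  ring

theorem eigenvalue_entropy_identity (p q : ℝ) (hp : p ∈ Set.Icc (0:ℝ) 1)
    (hq : q ∈ Set.Icc (0:ℝ) 1) (hpq : p * q < 1) :
    ((1 - p) * (1 - q) / (1 - p * q)) * Real.logb 2 ((1 - p) * (1 - q) / (1 - p * q)) +
      (p * (1 - q) / (1 - p * q)) * Real.logb 2 (p * (1 - q) / (1 - p * q)) +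
      ((1 - p) * q / (1 - p * q)) * Real.logb 2 ((1 - p) * q / (1 - p * q)) =
    (H2 (p * q) - H2 p - H2 q) / (1 - p * q) := by
  have hd : (1 - p * q) ≠ 0 := by linarith
  rw [key _ _ _ hd, key _ _ _ hd, key _ _ _ hd]
  simp only [H2]
  rw [Lmul p q]
  field_simp
  ring
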